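/- The twisted N=1 Schrödinger–Neveu–Schwarz algebra tsns, defined as the complex vector space with basis {L_n, G_r, Y_p, M_p | n ∈ ℤ, r ∈ 1/2+ℤ, p ∈ (1/2)ℤ} and the given brackets, satisfies the super Jacobi identity and is therefore a Lie superalgebra, with even part spanned by {L_n, Y_n, M_n | n ∈ ℤ} and odd part spanned by {G_r, Y_r, M_r | r ∈ 1/2+ℤ}. -/

import Mathlib

open Finsupp

/-- Basis indices of the twisted `N = 1` Schrödinger–Neveu–Schwarz algebra.
`L n` is `L_n` (`n ∈ ℤ`), `G k` is `G_{k+1/2}` (`k ∈ ℤ`),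
`Y k` is `Y_{k/2}` and `M k` is `M_{k/2}` (`k ∈ ℤ`, so `k/2` ranges over `(1/2)ℤ`). -/
inductive TIdx : Type
  | L : ℤ → TIdx
  | G : ℤ → TIdx
  | Y : ℤ → TIdx
  | M : ℤ → TIdx
  deriving DecidableEq

noncomputable section

/-- The underlying vector space of `tsns`: the free `ℂ`-vector space on the basis. -/
abbrev Tsns : Type := TIdx →₀ ℂ

/-- The basis vectors. -/
def bs (i : TIdx) : Tsns := Finsupp.single i 1

/-- The `ℤ₂`-parity of a basis vector. -/
def parity : TIdx → ZMod 2
  | .L _ => 0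
  | .G _ => 1
  | .Y k => (k : ZMod 2)
  | .M k => (k : ZMod 2)

/-- The sign `(-1)^{ab}` for parities `a, b`. -/
def sg (a b : ZMod 2) : ℂ := if a = 1 ∧ b = 1 then -1 else 1

/-- The super-bracket of `tsns` on basis vectors. -/
def brIdx : TIdx → TIdx → Tsns
  | .L n, .L m => ((m : ℂ) - n) • bs (.L (n + m))
  | .L n, .G k => ((k : ℂ) + 1/2 - n/2) • bs (.G (k + n))
  | .G k, .L n => (-((k : ℂ) + 1/2 - n/2)) • bs (.G (k + n))
  | .L n, .Y k => (if (k : ZMod 2) = 0 then ((k : ℂ) - n)/2 else (k : ℂ)/2) • bs (.Y (k + 2*n))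
  | .Y k, .L n => (-(if (k : ZMod 2) = 0 then ((k : ℂ) - n)/2 else (k : ℂ)/2)) • bs (.Y (k + 2*n))
  | .L n, .M k => (if (k : ZMod 2) = 0 then (k : ℂ)/2 else ((k : ℂ) + n)/2) • bs (.M (k + 2*n))
  | .M k, .L n => (-(if (k : ZMod 2) = 0 then (k : ℂ)/2 else ((k : ℂ) + n)/2)) • bs (.M (k + 2*n))
  | .G k, .G l => (2 : ℂ) • bs (.L (k + l + 1))
  | .G l, .Y k => (if (k : ZMod 2) = 0 then ((k : ℂ) - 2*l - 1)/4 else 2) • bs (.Y (k + 2*l + 1))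
  | .Y k, .G l => (if (k : ZMod 2) = 0 then -(((k : ℂ) - 2*l - 1)/4) else 2) • bs (.Y (k + 2*l + 1))
  | .G l, .M k => (if (k : ZMod 2) = 0 then (k : ℂ)/4 else 2) • bs (.M (k + 2*l + 1))
  | .M k, .G l => (if (k : ZMod 2) = 0 then -((k : ℂ)/4) else 2) • bs (.M (k + 2*l + 1))
  | .Y k, .Y l =>
      (if (k : ZMod 2) = 0 then (if (l : ZMod 2) = 0 then ((l : ℂ) - k)/4 else (l : ℂ)/4)
       else (if (l : ZMod 2) = 0 then -((k : ℂ)/4) else 2)) • bs (.M (k + l))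
  | _, _ => 0

/-- The super-bracket of `tsns`, as a bilinear map. -/
def brk : Tsns →ₗ[ℂ] Tsns →ₗ[ℂ] Tsns :=
  Finsupp.lsum ℂ fun i => LinearMap.toSpanSingleton ℂ _
    (Finsupp.lsum ℂ fun j => LinearMap.toSpanSingleton ℂ Tsns (brIdx i j))

/-- `x` is homogeneous of parity `σ`. -/
def IsHom (σ : ZMod 2) (x : Tsns) : Prop := ∀ i ∈ x.support, parity i = σ

/-- The tensor square `tsns ⊗ tsns`, modelled as the free vector space on pairs
of basis indices. -/
abbrev T2 : Type := (TIdx × TIdx) →₀ ℂ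

/-- The tensor cube `tsns ⊗ tsns ⊗ tsns`. -/
abbrev T3 : Type := (TIdx × TIdx × TIdx) →₀ ℂ

/-- The tensor product map `tsns × tsns → tsns ⊗ tsns`. -/
def tp : Tsns →ₗ[ℂ] Tsns →ₗ[ℂ] T2 :=
  Finsupp.lsum ℂ fun i => LinearMap.toSpanSingleton ℂ _
    (Finsupp.lsum ℂ fun j => LinearMap.toSpanSingleton ℂ T2 (Finsupp.single (i, j) 1))

/-- The tensor product map `tsns × tsns × tsns → tsns ⊗ tsns ⊗ tsns`. -/
def t3 : Tsns →ₗ[ℂ] Tsns →ₗ[ℂ] Tsns →ₗ[ℂ] T3 :=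
  Finsupp.lsum ℂ fun i => LinearMap.toSpanSingleton ℂ _
    (Finsupp.lsum ℂ fun j => LinearMap.toSpanSingleton ℂ _
      (Finsupp.lsum ℂ fun k => LinearMap.toSpanSingleton ℂ T3 (Finsupp.single (i, j, k) 1)))

/-- The adjoint diagonal action of `tsns` on `tsns ⊗ tsns`:
`x ∗ (a ⊗ b) = [x,a] ⊗ b + (-1)^{[x][a]} a ⊗ [x,b]`. -/
def star2 : Tsns →ₗ[ℂ] T2 →ₗ[ℂ] T2 :=
  Finsupp.lsum ℂ fun i => LinearMap.toSpanSingleton ℂ _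
    (Finsupp.lsum ℂ fun p => LinearMap.toSpanSingleton ℂ T2
      (tp (brIdx i p.1) (bs p.2) + sg (parity i) (parity p.1) • tp (bs p.1) (brIdx i p.2)))

/-- The adjoint diagonal action of `tsns` on `tsns ⊗ tsns ⊗ tsns`. -/
def star3 : Tsns →ₗ[ℂ] T3 →ₗ[ℂ] T3 :=
  Finsupp.lsum ℂ fun i => LinearMap.toSpanSingleton ℂ _
    (Finsupp.lsum ℂ fun t => LinearMap.toSpanSingleton ℂ T3
      (t3 (brIdx i t.1) (bs t.2.1) (bs t.2.2)
        + sg (parity i) (parity t.1) • t3 (bs t.1) (brIdx i t.2.1) (bs t.2.2)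
        + (sg (parity i) (parity t.1) * sg (parity i) (parity t.2.1)) •
            t3 (bs t.1) (bs t.2.1) (brIdx i t.2.2)))

/-- The super-twist map `τ(x ⊗ y) = (-1)^{[x][y]} y ⊗ x`. -/
def tau : T2 →ₗ[ℂ] T2 :=
  Finsupp.lsum ℂ fun p => LinearMap.toSpanSingleton ℂ T2
    (sg (parity p.1) (parity p.2) • Finsupp.single (p.2, p.1) 1)

/-- The super-cyclic map `ξ(x₁ ⊗ x₂ ⊗ x₃) = (-1)^{[x₁]([x₂]+[x₃])} x₂ ⊗ x₃ ⊗ x₁`. -/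
def xi : T3 →ₗ[ℂ] T3 :=
  Finsupp.lsum ℂ fun t => LinearMap.toSpanSingleton ℂ T3
    (sg (parity t.1) (parity t.2.1 + parity t.2.2) • Finsupp.single (t.2.1, t.2.2, t.1) 1)

/-- `Im(1⊗1 - τ) ⊆ tsns ⊗ tsns`. -/
def ImSkew : Submodule ℂ T2 := LinearMap.range (LinearMap.id - tau)

/-- `ℂ M₀ ⊗ M₀`, the tensor square of the center. -/
def CC : Submodule ℂ T2 := Submodule.span ℂ {Finsupp.single (TIdx.M 0, TIdx.M 0) 1}

/-- The `(1/2)ℤ`-degree of a basis vector, recorded in half-units (i.e. twice the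
degree, an integer). -/
def hdeg : TIdx → ℤ
  | .L n => 2*n
  | .G k => 2*k + 1
  | .Y k => k
  | .M k => k

/-- The degree (in half-units) of a basis vector of the tensor square. -/
def hdeg2 (p : TIdx × TIdx) : ℤ := hdeg p.1 + hdeg p.2

/-- `d : tsns → tsns ⊗ tsns` is a homogeneous derivation of `ℤ₂`-parity `π`:
`d [x,y] = (-1)^{[d][x]} x ∗ d y - (-1)^{[y]([d]+[x])} y ∗ d x`
(stated on homogeneous basis vectors). -/
def IsDerP (π : ZMod 2) (d : Tsns →ₗ[ℂ] T2) : Prop :=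
  ∀ i j : TIdx, d (brk (bs i) (bs j)) =
    sg π (parity i) • star2 (bs i) (d (bs j))
      - sg (parity j) (π + parity i) • star2 (bs j) (d (bs i))

/-- An even derivation `tsns → tsns ⊗ tsns`. -/
def IsDer2 (d : Tsns →ₗ[ℂ] T2) : Prop := IsDerP 0 d

/-- The special derivations `d^♮` on basis vectors (parameters `α, α†, β, β†`). -/
def dnatB (a a' b b' : ℂ) : TIdx → T2
  | .L n => (a * n) • Finsupp.single (.M 0, .M (2*n)) 1
      + (a' * n) • Finsupp.single (.M (2*n), .M 0) 1
  | .G k => (a * ((k : ℂ) + 1/2)) • Finsupp.single (.M 0, .M (2*k+1)) 1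
      + (a' * ((k : ℂ) + 1/2)) • Finsupp.single (.M (2*k+1), .M 0) 1
  | .Y k => b • Finsupp.single (.M 0, .Y k) 1 + b' • Finsupp.single (.Y k, .M 0) 1
  | .M k => (2*b) • Finsupp.single (.M 0, .M k) 1 + (2*b') • Finsupp.single (.M k, .M 0) 1

/-- The special derivations `d^♮ : tsns → tsns ⊗ tsns`. -/
def dnat (a a' b b' : ℂ) : Tsns →ₗ[ℂ] T2 :=
  Finsupp.lsum ℂ fun i => LinearMap.toSpanSingleton ℂ T2 (dnatB a a' b b' i)

/-- Multiplication by `(-1)^{σ·[u]}` on `tsns ⊗ tsns`. -/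
def twT2 (σ : ZMod 2) : T2 →ₗ[ℂ] T2 :=
  Finsupp.lsum ℂ fun p => LinearMap.toSpanSingleton ℂ T2
    (sg σ (parity p.1 + parity p.2) • Finsupp.single p 1)

/-- The coboundary `Δ_r (x) = (-1)^{[r][x]} x ∗ r`. -/
def Δr (r : T2) : Tsns →ₗ[ℂ] T2 :=
  Finsupp.lsum ℂ fun i => LinearMap.toSpanSingleton ℂ T2 (star2 (bs i) (twT2 (parity i) r))

/-- The embedding `tsns ⊗ (tsns ⊗ tsns) → tsns ⊗ tsns ⊗ tsns`. -/
def t13 : Tsns →ₗ[ℂ] T2 →ₗ[ℂ] T3 :=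
  Finsupp.lsum ℂ fun i => LinearMap.toSpanSingleton ℂ _
    (Finsupp.lsum ℂ fun q => LinearMap.toSpanSingleton ℂ T3 (Finsupp.single (i, q.1, q.2) 1))

/-- `1 ⊗ D : tsns ⊗ tsns → tsns ⊗ tsns ⊗ tsns` for an (even) linear map `D`. -/
def oneTensor (D : Tsns →ₗ[ℂ] T2) : T2 →ₗ[ℂ] T3 :=
  Finsupp.lsum ℂ fun p => LinearMap.toSpanSingleton ℂ T3 (t13 (bs p.1) (D (bs p.2)))

/-- The summand of `c(r)` coming from a pair of basis tensors
`p = a_i ⊗ b_i`, `q = a_j ⊗ b_j`. -/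
def cB (p q : TIdx × TIdx) : T3 :=
  sg (parity q.1) (parity p.2) • t3 (brIdx p.1 q.1) (bs p.2) (bs q.2)
    + t3 (bs p.1) (brIdx p.2 q.1) (bs q.2)
    + sg (parity q.1) (parity p.2) • t3 (bs p.1) (bs q.1) (brIdx p.2 q.2)

/-- `c` as a bilinear map. -/
def cY : T2 →ₗ[ℂ] T2 →ₗ[ℂ] T3 :=
  Finsupp.lsum ℂ fun p => LinearMap.toSpanSingleton ℂ _
    (Finsupp.lsum ℂ fun q => LinearMap.toSpanSingleton ℂ T3 (cB p q))

/-- `c(r) = [r¹²,r¹³] + [r¹²,r²³] + [r¹³,r²³]`. -/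
def cr (r : T2) : T3 := cY r r

/-- `(tsns, [·,·], D)` is a Lie superbialgebra: `Im D ⊆ Im(1⊗1−τ)`, the super
co-Jacobi identity holds, and `D` is a 1-cocycle. -/
def IsSuperBialg (D : Tsns →ₗ[ℂ] T2) : Prop :=
  (∀ x : Tsns, D x ∈ ImSkew) ∧
  (∀ x : Tsns,
    oneTensor D (D x) + xi (oneTensor D (D x)) + xi (xi (oneTensor D (D x))) = 0) ∧
  (∀ i j : TIdx, D (brk (bs i) (bs j)) =
    star2 (bs i) (D (bs j)) - sg (parity i) (parity j) • star2 (bs j) (D (bs i)))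

end

set_option maxHeartbeats 1000000 in
lemma brk_bs (i j : TIdx) : brk (bs i) (bs j) = brIdx i j := by
  simp [brk, bs, Finsupp.lsum_single, LinearMap.toSpanSingleton_apply_one]

lemma two_zmod : (2 : ZMod 2) = 0 := by decide
lemma zmod_one_eq_zero_iff : ((1 : ZMod 2) = 0) ↔ False := by decide
lemma sg_zero_left (b : ZMod 2) : sg 0 b = 1 := by
  simp [sg, show (0:ZMod 2) ≠ 1 by decide]
lemma sg_zero_right (a : ZMod 2) : sg a 0 = 1 := by
  simp [sg, show (0:ZMod 2) ≠ 1 by decide]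
lemma sg_one_one : sg 1 1 = -1 := by simp [sg]
lemma zmod_one_add_one : (1 : ZMod 2) + 1 = 0 := by decide
set_option maxHeartbeats 4000000 in
lemma skew (i j : TIdx) : brk (bs i) (bs j) = -(sg (parity i) (parity j)) • brk (bs j) (bs i) := by
  cases i <;> cases j <;>
  · rename_i a b
    obtain ⟨a, rfl | rfl⟩ := Int.even_or_odd' a <;>
    obtain ⟨b, rfl | rfl⟩ := Int.even_or_odd' b <;>
    simp only [brk_bs, brIdx, parity, Int.cast_add, Int.cast_mul, Int.cast_ofNat, Int.cast_one,
      two_zmod, zero_mul, mul_zero, add_zero, zero_add, zmod_one_eq_zero_iff,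
      eq_self_iff_true, if_true, if_false, sg_zero_left, sg_zero_right, sg_one_one,
      smul_smul, smul_zero, neg_zero, neg_one_smul, one_smul] <;>
    first
    | rfl
    | (simp; done)
    | (ext x
       simp only [bs, Finsupp.coe_smul, Finsupp.coe_add, Pi.add_apply, Pi.smul_apply,
         Finsupp.single_apply, smul_eq_mul, mul_ite, mul_one, mul_zero,
         Finsupp.coe_zero, Pi.zero_apply, Finsupp.smul_apply, Finsupp.coe_neg, Pi.neg_apply,
         neg_zero]
       split_ifs <;>
       first
       | (push_cast; ring1)
       | (subst_vars
          simp only [TIdx.L.injEq, TIdx.G.injEq, TIdx.Y.injEq, TIdx.M.injEq] at *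
          omega)
       | (simp; done))
set_option linter.unreachableTactic false
set_option linter.unusedTactic false

set_option maxHeartbeats 10000000 in
lemma jac (i j k : TIdx) : brk (bs i) (brk (bs j) (bs k)) =
      brk (brk (bs i) (bs j)) (bs k)
        + sg (parity i) (parity j) • brk (bs j) (brk (bs i) (bs k)) := by
  cases i <;> cases j <;> cases k <;>
  · rename_i a b c
    obtain ⟨a, rfl | rfl⟩ := Int.even_or_odd' a <;>
    obtain ⟨b, rfl | rfl⟩ := Int.even_or_odd' b <;>
    obtain ⟨c, rfl | rfl⟩ := Int.even_or_odd' c <;>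
    simp only [brk_bs, brIdx, parity, map_smul, LinearMap.smul_apply, map_zero,
      LinearMap.zero_apply, smul_zero, zero_smul, smul_smul, smul_add, add_zero, zero_add,
      Int.cast_add, Int.cast_mul, Int.cast_ofNat, Int.cast_one,
      two_zmod, zero_mul, mul_zero, zmod_one_add_one,
      zmod_one_eq_zero_iff, eq_self_iff_true, if_true, if_false,
      sg_zero_left, sg_zero_right, sg_one_one,
      neg_zero, neg_one_smul, one_smul] <;>
    first
    | rfl
    | (simp; done)
    | (ext x
       simp only [bs, Finsupp.coe_smul, Finsupp.coe_add, Pi.add_apply, Pi.smul_apply,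
         Finsupp.single_apply, smul_eq_mul, mul_ite, mul_one, mul_zero,
         Finsupp.coe_zero, Pi.zero_apply, Finsupp.smul_apply, Finsupp.coe_neg, Pi.neg_apply,
         neg_zero]
       split_ifs <;>
       first
       | (push_cast; ring1)
       | (subst_vars
          simp only [TIdx.L.injEq, TIdx.G.injEq, TIdx.Y.injEq, TIdx.M.injEq] at *
          omega)
       | (simp; done))
set_option linter.unreachableTactic false
set_option linter.unusedTactic false

lemma castEven (t : ℤ) : ((2*t : ℤ) : ZMod 2) = 0 := by
  push_cast
  simp [two_zmod]

lemma castOdd (t : ℤ) : ((2*t+1 : ℤ) : ZMod 2) = 1 := by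
  push_cast
  simp [two_zmod]

lemma isHom_zero (σ : ZMod 2) : IsHom σ 0 := by
  intro x hx
  simp at hx

lemma isHom_smul_bs {σ : ZMod 2} {m : TIdx} (h : parity m = σ) (C : ℂ) :
    IsHom σ (C • bs m) := by
  intro x hx
  have h1 : x ∈ (bs m).support := Finsupp.support_smul hx
  have h2 : x = m := by
    have := Finsupp.support_single_subset h1
    simpa [bs] using this
  subst h2; exact h

set_option maxHeartbeats 4000000 in
lemma homog (i j : TIdx) : IsHom (parity i + parity j) (brk (bs i) (bs j)) := by
  cases i <;> cases j <;>
  · rename_i a b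
    obtain ⟨a, rfl | rfl⟩ := Int.even_or_odd' a <;>
    obtain ⟨b, rfl | rfl⟩ := Int.even_or_odd' b <;>
    simp only [brk_bs, brIdx, parity, Int.cast_add, Int.cast_mul, Int.cast_ofNat, Int.cast_one,
      two_zmod, zero_mul, mul_zero, add_zero, zero_add,
      zmod_one_eq_zero_iff, eq_self_iff_true, if_true, if_false] <;>
    first
    | exact isHom_zero _
    | (apply isHom_smul_bs
       · simp only [parity, Int.cast_add, Int.cast_mul, Int.cast_ofNat, Int.cast_one,
           two_zmod, zero_mul, mul_zero, add_zero, zero_add] <;> decide)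

lemma par0 (i : TIdx) : parity i = 0 ↔
    ((∃ n, i = TIdx.L n) ∨ (∃ n, i = TIdx.Y (2*n)) ∨ (∃ n, i = TIdx.M (2*n))) := by
  cases i with
  | L a => simp [parity]
  | G a => simp [parity, show (1:ZMod 2) ≠ 0 by decide]
  | Y a =>
    constructor
    · intro h
      obtain ⟨t, rfl⟩ : (2:ℤ) ∣ a := by
        have := (ZMod.intCast_zmod_eq_zero_iff_dvd a 2).1 h
        exact_mod_cast this
      exact Or.inr (Or.inl ⟨t, rfl⟩)
    · rintro (⟨n, h⟩ | ⟨n, h⟩ | ⟨n, h⟩) <;> (try cases h) <;> exact castEven n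
  | M a =>
    constructor
    · intro h
      obtain ⟨t, rfl⟩ : (2:ℤ) ∣ a := by
        have := (ZMod.intCast_zmod_eq_zero_iff_dvd a 2).1 h
        exact_mod_cast this
      exact Or.inr (Or.inr ⟨t, rfl⟩)
    · rintro (⟨n, h⟩ | ⟨n, h⟩ | ⟨n, h⟩) <;> (try cases h) <;> exact castEven n

lemma zmod2_eq_one {x : ZMod 2} (h : ¬ x = 0) : x = 1 := by
  revert h; revert x; decide

lemma par1 (i : TIdx) : parity i = 1 ↔
    ((∃ k, i = TIdx.G k) ∨ (∃ k, i = TIdx.Y (2*k+1)) ∨ (∃ k, i = TIdx.M (2*k+1))) := by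
  cases i with
  | L a => simp [parity, show (0:ZMod 2) ≠ 1 by decide]
  | G a => simp [parity]
  | Y a =>
    constructor
    · intro h
      have hd : ¬ (2:ℤ) ∣ a := by
        intro h0
        have h2 : ((2:ℕ):ℤ) ∣ a := by exact_mod_cast h0
        have := (ZMod.intCast_zmod_eq_zero_iff_dvd a 2).2 h2
        rw [show ((a:ℤ) : ZMod 2) = 1 from h] at this
        exact absurd this (by decide)
      obtain ⟨t, rfl⟩ : ∃ t, a = 2*t+1 := ⟨a/2, by omega⟩
      exact Or.inr (Or.inl ⟨t, rfl⟩)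
    · rintro (⟨n, h⟩ | ⟨n, h⟩ | ⟨n, h⟩) <;> (try cases h) <;> exact castOdd n
  | M a =>
    constructor
    · intro h
      have hd : ¬ (2:ℤ) ∣ a := by
        intro h0
        have h2 : ((2:ℕ):ℤ) ∣ a := by exact_mod_cast h0
        have := (ZMod.intCast_zmod_eq_zero_iff_dvd a 2).2 h2
        rw [show ((a:ℤ) : ZMod 2) = 1 from h] at this
        exact absurd this (by decide)
      obtain ⟨t, rfl⟩ : ∃ t, a = 2*t+1 := ⟨a/2, by omega⟩
      exact Or.inr (Or.inr ⟨t, rfl⟩)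
    · rintro (⟨n, h⟩ | ⟨n, h⟩ | ⟨n, h⟩) <;> (try cases h) <;> exact castOdd n
/-- `tsns` is a Lie superalgebra: the bracket is super skew-symmetric,
respects the `ℤ₂`-grading, and satisfies the super Jacobi identity; the even part
is spanned by `{L_n, Y_n, M_n | n ∈ ℤ}` and the odd part by
`{G_r, Y_r, M_r | r ∈ 1/2 + ℤ}`. -/
theorem tsns_is_lie_superalgebra :
    (∀ i j : TIdx, brk (bs i) (bs j) = -(sg (parity i) (parity j)) • brk (bs j) (bs i)) ∧
    (∀ i j : TIdx, IsHom (parity i + parity j) (brk (bs i) (bs j))) ∧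
    (∀ i j k : TIdx, brk (bs i) (brk (bs j) (bs k)) =
      brk (brk (bs i) (bs j)) (bs k)
        + sg (parity i) (parity j) • brk (bs j) (brk (bs i) (bs k))) ∧
    (∀ i : TIdx, parity i = 0 ↔
      ((∃ n, i = TIdx.L n) ∨ (∃ n, i = TIdx.Y (2*n)) ∨ (∃ n, i = TIdx.M (2*n)))) ∧
    (∀ i : TIdx, parity i = 1 ↔
      ((∃ k, i = TIdx.G k) ∨ (∃ k, i = TIdx.Y (2*k+1)) ∨ (∃ k, i = TIdx.M (2*k+1)))) :=
  ⟨skew, homog, jac, par0, par1⟩
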